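/- Let n ≥ 2, a ∈ ℝⁿ, D = ℝⁿ∖{a}, x ∈ D, and t > 0 with t|x−a| < 1. Set u = (x−a)/|x−a|, y₁ = x − (t|x−a|²/(1 + t|x−a|)) u and y₂ = x + (t|x−a|²/(1 − t|x−a|)) u. Then c_D(x, y₁) = t and c_D(x, y₂) = t; consequently the radii r = t δ_D(x)²/(1 + t δ_D(x)) and R = t δ_D(x)²/(1 − t δ_D(x)) in the inclusion Bⁿ(x,r) ⊂ B_c(x,t) ⊂ Bⁿ(x,R) are best possible. -/

import Mathlib

open Metric Set

/-- Euclidean `n`-space. -/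
abbrev E (n : ℕ) := EuclideanSpace ℝ (Fin n)

/-- **Sharpness of the Euclidean-ball inclusions for Cassinian balls of punctured space.**
Let `D = ℝⁿ∖{a}`, `x ∈ D`, `t > 0` with `t|x-a| < 1`, `u = (x-a)/|x-a|`,
`y₁ = x - (t|x-a|²/(1+t|x-a|)) u` and `y₂ = x + (t|x-a|²/(1-t|x-a|)) u`.
Then `c_D(x,y₁) = t = c_D(x,y₂)`, while `|x-y₁| = t δ_D(x)²/(1+t δ_D(x))` and
`|x-y₂| = t δ_D(x)²/(1-t δ_D(x))` (here `δ_D(x) = |x-a|`); hence the radii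
in the inclusion `Bⁿ(x,r) ⊆ B_c(x,t) ⊆ Bⁿ(x,R)` are best possible. -/
theorem cassinian_euclidean_inclusion_sharp (n : ℕ) (hn : 2 ≤ n)
    (a x : E n) (hx : x ≠ a) (t : ℝ) (ht : 0 < t) (ht1 : t * ‖x - a‖ < 1)
    (u y₁ y₂ : E n)
    (hu : u = ‖x - a‖⁻¹ • (x - a))
    (hy₁ : y₁ = x - (t * ‖x - a‖ ^ 2 / (1 + t * ‖x - a‖)) • u)
    (hy₂ : y₂ = x + (t * ‖x - a‖ ^ 2 / (1 - t * ‖x - a‖)) • u) :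
    dist x y₁ / (dist x a * dist y₁ a) = t ∧
      dist x y₂ / (dist x a * dist y₂ a) = t ∧
      dist x y₁ = t * ‖x - a‖ ^ 2 / (1 + t * ‖x - a‖) ∧
      dist x y₂ = t * ‖x - a‖ ^ 2 / (1 - t * ‖x - a‖) := by
  have hd0 : (0:ℝ) < ‖x - a‖ := by
    simpa using norm_sub_pos_iff.mpr (sub_ne_zero.mpr hx)
  set d := ‖x - a‖ with hdd
  have hdne : d ≠ 0 := ne_of_gt hd0
  have hp : (0:ℝ) < 1 + t * d := by nlinarith
  have hq : (0:ℝ) < 1 - t * d := by linarith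
  have hxa : x - a = d • u := by
    rw [hu, smul_smul, mul_inv_cancel₀ hdne, one_smul]
  have hc1 : (0:ℝ) ≤ t * d ^ 2 / (1 + t * d) := by positivity
  have hc2 : (0:ℝ) ≤ t * d ^ 2 / (1 - t * d) := by positivity
  have hxy1 : x - y₁ = (t * d ^ 2 / (1 + t * d)) • u := by
    rw [hy₁]; abel
  have hxy2 : x - y₂ = (-(t * d ^ 2 / (1 - t * d))) • u := by
    rw [hy₂, neg_smul]; abel
  have hnu : ‖u‖ = 1 := by
    rw [hu, norm_smul, norm_inv, norm_norm, ← hdd, inv_mul_cancel₀ hdne]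
  have hdx1 : dist x y₁ = t * d ^ 2 / (1 + t * d) := by
    rw [dist_eq_norm, hxy1, norm_smul, hnu, mul_one, Real.norm_eq_abs,
      abs_of_nonneg hc1]
  have hdx2 : dist x y₂ = t * d ^ 2 / (1 - t * d) := by
    rw [dist_eq_norm, hxy2, norm_smul, hnu, mul_one, Real.norm_eq_abs,
      abs_neg, abs_of_nonneg hc2]
  have hy1a : y₁ - a = (d - t * d ^ 2 / (1 + t * d)) • u := by
    have : y₁ - a = (x - a) - (x - y₁) := by abel
    rw [this, hxa, hxy1, ← sub_smul]
  have hy2a : y₂ - a = (d + t * d ^ 2 / (1 - t * d)) • u := by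
    have : y₂ - a = (x - a) - (x - y₂) := by abel
    rw [this, hxa, hxy2, neg_smul, sub_neg_eq_add, ← add_smul]
  have e1 : d - t * d ^ 2 / (1 + t * d) = d / (1 + t * d) := by
    field_simp; ring
  have e2 : d + t * d ^ 2 / (1 - t * d) = d / (1 - t * d) := by
    rw [eq_div_iff hq.ne', add_mul, div_mul_cancel₀ _ hq.ne']; ring
  have hdy1 : dist y₁ a = d / (1 + t * d) := by
    rw [dist_eq_norm, hy1a, e1, norm_smul, hnu, mul_one, Real.norm_eq_abs,
      abs_of_nonneg (by positivity)]
  have hdy2 : dist y₂ a = d / (1 - t * d) := by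
    rw [dist_eq_norm, hy2a, e2, norm_smul, hnu, mul_one, Real.norm_eq_abs,
      abs_of_nonneg (by positivity)]
  have hdxa : dist x a = d := by rw [dist_eq_norm]
  refine ⟨?_, ?_, hdx1, hdx2⟩
  · rw [hdx1, hdxa, hdy1]; field_simp
  · rw [hdx2, hdxa, hdy2]; field_simp
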